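/- arXiv:2208.06877 — 2 statements merged into one kernel-verified Lean document; each statement's English description precedes it below -/
import Mathlib

section
/- For i.i.d. Rademacher entries, the variance of the Hutchinson estimator v^T A v of tr(A) is at most the variance of the estimator with standard Gaussian entries, for any symmetric matrix A. -/
open Matrix MeasureTheory ProbabilityTheory Real Filter
open scoped NNReal ENNReal

lemma integrable_pow_mul_gauss (k : ℕ) :
    Integrable (fun x : ℝ => x ^ k * Real.exp (-(2⁻¹ : ℝ) * x ^ 2)) := by
  have h := integrable_rpow_mul_exp_neg_mul_sq (b := (2⁻¹:ℝ)) (by norm_num)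
    (s := (k:ℝ)) (by exact neg_one_lt_zero.trans_le (Nat.cast_nonneg k))
  simpa [Real.rpow_natCast] using h

lemma gauss_integral_zero : ∫ x : ℝ, Real.exp (-(2⁻¹:ℝ) * x ^ 2) = Real.sqrt (2 * π) := by
  have h := integral_gaussian (2⁻¹:ℝ)
  rw [show π / (2⁻¹:ℝ) = 2 * π by ring] at h
  exact h

lemma tendsto_gauss_atTop :
    Tendsto (fun x : ℝ => x * Real.exp (-(2⁻¹:ℝ) * x ^ 2)) atTop (nhds 0) := by
  have h := rpow_mul_exp_neg_mul_sq_isLittleO_exp_neg (b := (2⁻¹:ℝ)) (by norm_num) 1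
  have h2 : Tendsto (fun x : ℝ => Real.exp (-((1:ℝ)/2) * x)) atTop (nhds 0) := by
    apply Real.tendsto_exp_atBot.comp
    exact (tendsto_const_mul_atBot_of_neg (by norm_num)).mpr tendsto_id
  have := h.isBigO.trans_tendsto h2
  simpa [Real.rpow_natCast] using this

lemma tendsto_gauss_atBot :
    Tendsto (fun x : ℝ => x * Real.exp (-(2⁻¹:ℝ) * x ^ 2)) atBot (nhds 0) := by
  have h := (tendsto_gauss_atTop.comp tendsto_neg_atBot_atTop).neg
  simp only [Function.comp_def, neg_sq, neg_mul, neg_neg, neg_zero] at h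
  simpa only [neg_mul] using h

lemma hasDerivAt_exp_gauss (x : ℝ) :
    HasDerivAt (fun x : ℝ => -Real.exp (-(2⁻¹:ℝ) * x ^ 2))
      (x * Real.exp (-(2⁻¹:ℝ) * x ^ 2)) x := by
  have h1 : HasDerivAt (fun x : ℝ => -(2⁻¹:ℝ) * x ^ 2) (-(2⁻¹:ℝ) * (2 * x)) x := by
    simpa using ((hasDerivAt_pow 2 x).const_mul (-(2⁻¹:ℝ)))
  have h2 := (h1.exp).neg
  rw [show x * Real.exp (-(2⁻¹:ℝ) * x ^ 2)
      = -(Real.exp (-(2⁻¹:ℝ) * x ^ 2) * (-(2⁻¹:ℝ) * (2 * x))) from by ring]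
  exact h2


lemma tendsto_sq_atBot : Tendsto (fun x : ℝ => x ^ 2) atBot atTop := by
  have h := (tendsto_pow_atTop (α := ℝ) (n := 2) two_ne_zero).comp tendsto_neg_atBot_atTop
  simp only [Function.comp_def, neg_sq] at h
  exact h

lemma tendsto_negexp_atBot : Tendsto (fun x : ℝ => -Real.exp (-(2⁻¹:ℝ) * x ^ 2)) atBot (nhds 0) := by
  rw [show (0:ℝ) = -0 by norm_num]
  apply Tendsto.neg
  apply Real.tendsto_exp_atBot.comp
  have h2 : Tendsto (fun y : ℝ => -(2⁻¹:ℝ) * y) atTop atBot :=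
    (tendsto_const_mul_atBot_of_neg (by norm_num)).mpr tendsto_id
  exact h2.comp tendsto_sq_atBot

lemma tendsto_negexp_atTop : Tendsto (fun x : ℝ => -Real.exp (-(2⁻¹:ℝ) * x ^ 2)) atTop (nhds 0) := by
  rw [show (0:ℝ) = -0 by norm_num]
  apply Tendsto.neg
  apply Real.tendsto_exp_atBot.comp
  have h2 : Tendsto (fun y : ℝ => -(2⁻¹:ℝ) * y) atTop atBot :=
    (tendsto_const_mul_atBot_of_neg (by norm_num)).mpr tendsto_id
  exact h2.comp (tendsto_pow_atTop two_ne_zero)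

lemma gauss_integral_one : ∫ x : ℝ, x * Real.exp (-(2⁻¹:ℝ) * x ^ 2) = 0 := by
  have key := integral_of_hasDerivAt_of_tendsto hasDerivAt_exp_gauss
    (by simpa using integrable_pow_mul_gauss 1) tendsto_negexp_atBot tendsto_negexp_atTop
  simpa using key

lemma hasDerivAt_xexp_gauss (x : ℝ) :
    HasDerivAt (fun x : ℝ => -x * Real.exp (-(2⁻¹:ℝ) * x ^ 2))
      (x ^ 2 * Real.exp (-(2⁻¹:ℝ) * x ^ 2) - Real.exp (-(2⁻¹:ℝ) * x ^ 2)) x := by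
  have h1 : HasDerivAt (fun x : ℝ => -(2⁻¹:ℝ) * x ^ 2) (-(2⁻¹:ℝ) * (2 * x)) x := by
    simpa using ((hasDerivAt_pow 2 x).const_mul (-(2⁻¹:ℝ)))
  have h2 := ((hasDerivAt_id x).neg).mul h1.exp
  rw [show x ^ 2 * Real.exp (-(2⁻¹:ℝ) * x ^ 2) - Real.exp (-(2⁻¹:ℝ) * x ^ 2)
      = -1 * Real.exp (-(2⁻¹:ℝ) * x ^ 2)
        + -x * (Real.exp (-(2⁻¹:ℝ) * x ^ 2) * (-(2⁻¹:ℝ) * (2 * x))) from by ring]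
  exact h2

lemma gauss_integral_two :
    ∫ x : ℝ, x ^ 2 * Real.exp (-(2⁻¹:ℝ) * x ^ 2) = Real.sqrt (2 * π) := by
  have hbot : Tendsto (fun x : ℝ => -x * Real.exp (-(2⁻¹:ℝ) * x ^ 2)) atBot (nhds 0) := by
    have h := tendsto_gauss_atBot.neg
    simpa [neg_mul] using h
  have htop : Tendsto (fun x : ℝ => -x * Real.exp (-(2⁻¹:ℝ) * x ^ 2)) atTop (nhds 0) := by
    have h := tendsto_gauss_atTop.neg
    simpa [neg_mul] using h
  have hint : Integrable (fun x : ℝ =>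
      x ^ 2 * Real.exp (-(2⁻¹:ℝ) * x ^ 2) - Real.exp (-(2⁻¹:ℝ) * x ^ 2)) :=
    (integrable_pow_mul_gauss 2).sub (by simpa using integrable_pow_mul_gauss 0)
  have key := integral_of_hasDerivAt_of_tendsto hasDerivAt_xexp_gauss hint hbot htop
  rw [integral_sub (integrable_pow_mul_gauss 2)
    (by simpa using integrable_pow_mul_gauss 0), gauss_integral_zero] at key
  linarith

lemma gaussianPDFReal_zero_one (x : ℝ) :
    gaussianPDFReal 0 1 x = (Real.sqrt (2 * π))⁻¹ * Real.exp (-(2⁻¹:ℝ) * x ^ 2) := by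
  simp only [gaussianPDFReal, NNReal.coe_one, mul_one, sub_zero]
  rw [show -x ^ 2 / 2 = -(2⁻¹:ℝ) * x ^ 2 by ring]

lemma gaussianPDF_zero_one_eq :
    gaussianPDF 0 1 = fun x => ((Real.toNNReal (gaussianPDFReal 0 1 x) : ℝ≥0) : ℝ≥0∞) := rfl

lemma integral_gaussianReal01 (f : ℝ → ℝ) :
    ∫ x, f x ∂(gaussianReal 0 1) = ∫ x, gaussianPDFReal 0 1 x * f x := by
  rw [gaussianReal_of_var_ne_zero 0 one_ne_zero, gaussianPDF_zero_one_eq,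
    integral_withDensity_eq_integral_smul
      ((measurable_gaussianPDFReal 0 1).real_toNNReal) f]
  congr 1
  funext x
  rw [NNReal.smul_def, Real.coe_toNNReal _ (gaussianPDFReal_nonneg _ _ _), smul_eq_mul]

lemma integrable_gauss01_pow (k : ℕ) :
    Integrable (fun x : ℝ => x ^ k) (gaussianReal 0 1) := by
  rw [gaussianReal_of_var_ne_zero 0 one_ne_zero, gaussianPDF_zero_one_eq,
    integrable_withDensity_iff_integrable_smul
      ((measurable_gaussianPDFReal 0 1).real_toNNReal)]
  have : (fun x : ℝ => (Real.toNNReal (gaussianPDFReal 0 1 x)) • x ^ k)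
      = fun x => (Real.sqrt (2 * π))⁻¹ * (x ^ k * Real.exp (-(2⁻¹:ℝ) * x ^ 2)) := by
    funext x
    rw [NNReal.smul_def, Real.coe_toNNReal _ (gaussianPDFReal_nonneg _ _ _),
      gaussianPDFReal_zero_one, smul_eq_mul]
    ring
  rw [this]
  exact (integrable_pow_mul_gauss k).const_mul _

lemma sqrt_two_pi_ne_zero : Real.sqrt (2 * π) ≠ 0 := by
  positivity

lemma integral_gauss01_id : ∫ x, x ∂(gaussianReal 0 1) = 0 := by
  rw [integral_gaussianReal01 (fun x => x)]
  have : (fun x : ℝ => gaussianPDFReal 0 1 x * x)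
      = fun x => (Real.sqrt (2 * π))⁻¹ * (x * Real.exp (-(2⁻¹:ℝ) * x ^ 2)) := by
    funext x; rw [gaussianPDFReal_zero_one]; ring
  rw [this, integral_const_mul, gauss_integral_one, mul_zero]

lemma integral_gauss01_sq : ∫ x, x ^ 2 ∂(gaussianReal 0 1) = 1 := by
  rw [integral_gaussianReal01 (fun x => x ^ 2)]
  have : (fun x : ℝ => gaussianPDFReal 0 1 x * x ^ 2)
      = fun x => (Real.sqrt (2 * π))⁻¹ * (x ^ 2 * Real.exp (-(2⁻¹:ℝ) * x ^ 2)) := by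
    funext x; rw [gaussianPDFReal_zero_one]; ring
  rw [this, integral_const_mul, gauss_integral_two, inv_mul_cancel₀ sqrt_two_pi_ne_zero]

lemma memℒp_id_four_gauss : MemLp (id : ℝ → ℝ) 4 (gaussianReal 0 1) := by
  refine ⟨measurable_id.aestronglyMeasurable, ?_⟩
  rw [eLpNorm_eq_lintegral_rpow_enorm_toReal (by norm_num) (by norm_num)]
  refine ENNReal.rpow_lt_top_of_nonneg (by positivity) ?_
  have h := (integrable_gauss01_pow 4).2
  rw [hasFiniteIntegral_def] at h
  have heq : ∀ x : ℝ, ‖id x‖ₑ ^ ((4:ℝ≥0∞)).toReal = ‖x ^ 4‖ₑ := by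
    intro x
    rw [show ((4:ℝ≥0∞)).toReal = ((4:ℕ):ℝ) by norm_num, ENNReal.rpow_natCast,
      enorm_pow]
    rfl
  rw [lintegral_congr heq]
  exact h.ne


section Core

variable {Ω : Type*} [MeasurableSpace Ω] {μ : Measure Ω} [IsProbabilityMeasure μ] {n : ℕ}
  {v : Ω → Fin n → ℝ}

lemma memℒp_mul4 {f g : Ω → ℝ} (hf : MemLp f 4 μ) (hg : MemLp g 4 μ) :
    MemLp (fun ω => f ω * g ω) 2 μ := by
  have h : (1:ℝ≥0∞)/2 = 1/4 + 1/4 := by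
    rw [ENNReal.div_add_div_same, ENNReal.div_eq_div_iff] <;> norm_num
  haveI : ENNReal.HolderTriple 4 4 2 := ⟨by simpa [one_div] using h.symm⟩
  exact hg.smul hf

lemma integrable_mul2 {f g : Ω → ℝ} (hf : MemLp f 2 μ) (hg : MemLp g 2 μ) :
    Integrable (fun ω => f ω * g ω) μ := by
  have h : (1:ℝ≥0∞)/1 = 1/2 + 1/2 := by
    rw [ENNReal.div_add_div_same, ENNReal.div_eq_div_iff] <;> norm_num
  haveI : ENNReal.HolderTriple 2 2 1 := ⟨by simpa [one_div] using h.symm⟩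
  exact memLp_one_iff_integrable.mp (hg.smul hf)

lemma mem2_of_mem4 {f : Ω → ℝ} (hf : MemLp f 4 μ) : MemLp f 2 μ :=
  hf.mono_exponent (by norm_num)

section Indep

variable (hm : ∀ i, Measurable fun ω => v ω i)
  (hv : iIndepFun (fun i ω => v ω i) μ)

include hm hv

lemma indep_mul_single {a b c m : Fin n} (ha : a ≠ m) (hb : b ≠ m) (hc : c ≠ m) :
    IndepFun (fun ω => v ω a * v ω b * v ω c) (fun ω => v ω m) μ := by
  classical
  have hdisj : Disjoint ({a, b, c} : Finset (Fin n)) ({m} : Finset (Fin n)) := by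
    simp only [Finset.disjoint_left, Finset.mem_insert, Finset.mem_singleton]
    rintro x (rfl | rfl | rfl) hx <;> simp_all
  have h := hv.indepFun_finset {a, b, c} {m} hdisj hm
  have hφ : Measurable (fun x : (({a, b, c} : Finset (Fin n)) → ℝ) =>
      x ⟨a, by simp⟩ * x ⟨b, by simp⟩ * x ⟨c, by simp⟩) := by fun_prop
  have hψ : Measurable (fun x : (({m} : Finset (Fin n)) → ℝ) => x ⟨m, by simp⟩) :=
    measurable_pi_apply _
  exact h.comp hφ hψ

variable (h4 : ∀ i, MemLp (fun ω => v ω i) 4 μ) (h1 : ∀ i, ∫ ω, v ω i ∂μ = 0)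
include h4

lemma integrable_four {a b c m : Fin n} :
    Integrable (fun ω => v ω a * v ω b * (v ω c * v ω m)) μ :=
  integrable_mul2 (memℒp_mul4 (h4 a) (h4 b)) (memℒp_mul4 (h4 c) (h4 m))

include h1

lemma integral_four_zero {a b c m : Fin n} (ha : a ≠ m) (hb : b ≠ m) (hc : c ≠ m) :
    ∫ ω, v ω a * v ω b * v ω c * v ω m ∂μ = 0 := by
  have hind := indep_mul_single hm hv ha hb hc
  have hX : Integrable (fun ω => v ω a * v ω b * v ω c) μ :=
    integrable_mul2 (memℒp_mul4 (h4 a) (h4 b)) (mem2_of_mem4 (h4 c))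
  have hY : Integrable (fun ω => v ω m) μ := (h4 m).integrable (by norm_num)
  have h := hind.integral_mul_eq_mul_integral hX.aestronglyMeasurable hY.aestronglyMeasurable
  have e : ((fun ω => v ω a * v ω b * v ω c) * fun ω => v ω m)
      = fun ω => v ω a * v ω b * v ω c * v ω m := rfl
  rw [e] at h
  rw [h, h1 m, mul_zero]

lemma integral_four_zero' {a b c m : Fin n} (ha : a ≠ m) (hb : b ≠ m) (hc : c ≠ m) :
    ∫ ω, v ω a * v ω b * (v ω c * v ω m) ∂μ = 0 := by
  rw [show (fun ω => v ω a * v ω b * (v ω c * v ω m))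
      = fun ω => v ω a * v ω b * v ω c * v ω m from funext fun ω => by ring]
  exact integral_four_zero hm hv h4 h1 ha hb hc

end Indep

section Moments

variable (hm : ∀ i, Measurable fun ω => v ω i)
  (hv : iIndepFun (fun i ω => v ω i) μ)
  (h4 : ∀ i, MemLp (fun ω => v ω i) 4 μ)
  (h1 : ∀ i, ∫ ω, v ω i ∂μ = 0)
  (h2 : ∀ i, ∫ ω, (v ω i) ^ 2 ∂μ = 1)

include hv h4 h2 in
lemma integral_sq_sq {i j : Fin n} (hij : i ≠ j) :
    ∫ ω, (v ω i) ^ 2 * (v ω j) ^ 2 ∂μ = 1 := by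
  have hind : IndepFun (fun ω => (v ω i) ^ 2) (fun ω => (v ω j) ^ 2) μ :=
    (hv.indepFun hij).comp (measurable_id.pow_const 2) (measurable_id.pow_const 2)
  have hi : Integrable (fun ω => (v ω i) ^ 2) μ := (mem2_of_mem4 (h4 i)).integrable_sq
  have hj : Integrable (fun ω => (v ω j) ^ 2) μ := (mem2_of_mem4 (h4 j)).integrable_sq
  have h := hind.integral_mul_eq_mul_integral hi.aestronglyMeasurable hj.aestronglyMeasurable
  have e : ((fun ω => (v ω i) ^ 2) * fun ω => (v ω j) ^ 2)
      = fun ω => (v ω i) ^ 2 * (v ω j) ^ 2 := rfl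
  rw [e] at h
  rw [h, h2 i, h2 j, mul_one]

include hm hv h4 h1 h2 in
lemma integral_offdiag_sq (A : Matrix (Fin n) (Fin n) ℝ) :
    ∫ ω, (∑ p ∈ Finset.univ.offDiag, A p.1 p.2 * (v ω p.1 * v ω p.2)) ^ 2 ∂μ
      = ∑ p ∈ Finset.univ.offDiag, (A p.1 p.2 ^ 2 + A p.1 p.2 * A p.2 p.1) := by
  classical
  have expand : (fun ω => (∑ p ∈ Finset.univ.offDiag, A p.1 p.2 * (v ω p.1 * v ω p.2)) ^ 2)
      = fun ω => ∑ x ∈ Finset.univ.offDiag ×ˢ Finset.univ.offDiag,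
          (A x.1.1 x.1.2 * A x.2.1 x.2.2)
            * (v ω x.1.1 * v ω x.1.2 * (v ω x.2.1 * v ω x.2.2)) := by
    funext ω
    rw [sq, Finset.sum_mul_sum, ← Finset.sum_product']
    exact Finset.sum_congr rfl fun x _ => by ring
  rw [expand, integral_finset_sum _
    (fun x _ => (integrable_four hm hv h4 (a := x.1.1) (b := x.1.2) (c := x.2.1)
      (m := x.2.2)).const_mul _)]
  have step : ∀ x : (Fin n × Fin n) × (Fin n × Fin n),
      ∫ ω, (A x.1.1 x.1.2 * A x.2.1 x.2.2)
          * (v ω x.1.1 * v ω x.1.2 * (v ω x.2.1 * v ω x.2.2)) ∂μ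
        = (A x.1.1 x.1.2 * A x.2.1 x.2.2)
          * ∫ ω, v ω x.1.1 * v ω x.1.2 * (v ω x.2.1 * v ω x.2.2) ∂μ :=
    fun x => integral_const_mul _ _
  rw [Finset.sum_congr rfl fun x _ => step x, Finset.sum_product]
  apply Finset.sum_congr rfl
  intro p hp
  have hp' := Finset.mem_offDiag.mp hp
  have hsub : ({p, p.swap} : Finset ((Fin n) × (Fin n))) ⊆ Finset.univ.offDiag := by
    intro q hq
    simp only [Finset.mem_insert, Finset.mem_singleton] at hq
    rcases hq with rfl | rfl
    · exact hp
    · rw [Finset.mem_offDiag]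
      exact ⟨Finset.mem_univ _, Finset.mem_univ _, by
        rw [Prod.fst_swap, Prod.snd_swap]; exact hp'.2.2.symm⟩
  have hvanish : ∀ q ∈ Finset.univ.offDiag, q ∉ ({p, p.swap} : Finset ((Fin n) × (Fin n))) →
      (A p.1 p.2 * A q.1 q.2)
        * ∫ ω, v ω p.1 * v ω p.2 * (v ω q.1 * v ω q.2) ∂μ = 0 := by
    intro q hq hqn
    have hq' := Finset.mem_offDiag.mp hq
    simp only [Finset.mem_insert, Finset.mem_singleton, not_or] at hqn
    obtain ⟨hq1, hq2⟩ := hqn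
    have hzero : ∫ ω, v ω p.1 * v ω p.2 * (v ω q.1 * v ω q.2) ∂μ = 0 := by
      by_cases hc : q.1 = p.1 ∨ q.1 = p.2
      · have hm1 : p.1 ≠ q.2 := by
          rcases hc with h | h
          · rw [← h]; exact hq'.2.2
          · intro hh
            exact hq2 (Prod.ext h (hh.symm))
        have hm2 : p.2 ≠ q.2 := by
          rcases hc with h | h
          · intro hh
            exact hq1 (Prod.ext h (hh.symm))
          · rw [← h]; exact hq'.2.2
        exact integral_four_zero' hm hv h4 h1 hm1 hm2 hq'.2.2
      · push_neg at hc
        rw [show (fun ω => v ω p.1 * v ω p.2 * (v ω q.1 * v ω q.2))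
            = fun ω => v ω p.1 * v ω p.2 * (v ω q.2 * v ω q.1) from
          funext fun ω => by ring]
        exact integral_four_zero' hm hv h4 h1 (Ne.symm hc.1) (Ne.symm hc.2)
          (Ne.symm hq'.2.2)
    rw [hzero, mul_zero]
  rw [← Finset.sum_subset hsub hvanish]
  have hpsw : p ≠ p.swap := by
    intro h
    have h' := congrArg Prod.fst h
    rw [Prod.fst_swap] at h'
    exact hp'.2.2 h'
  rw [Finset.sum_pair hpsw]
  have e1 : ∫ ω, v ω p.1 * v ω p.2 * (v ω p.1 * v ω p.2) ∂μ = 1 := by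
    rw [show (fun ω => v ω p.1 * v ω p.2 * (v ω p.1 * v ω p.2))
        = fun ω => (v ω p.1) ^ 2 * (v ω p.2) ^ 2 from funext fun ω => by ring]
    exact integral_sq_sq hv h4 h2 hp'.2.2
  have e2 : ∫ ω, v ω p.1 * v ω p.2 * (v ω p.swap.1 * v ω p.swap.2) ∂μ = 1 := by
    rw [Prod.fst_swap, Prod.snd_swap,
      show (fun ω => v ω p.1 * v ω p.2 * (v ω p.2 * v ω p.1))
        = fun ω => (v ω p.1) ^ 2 * (v ω p.2) ^ 2 from funext fun ω => by ring]
    exact integral_sq_sq hv h4 h2 hp'.2.2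
  rw [e1, e2, Prod.fst_swap, Prod.snd_swap]
  ring

include hv h4 h1 in
lemma integral_offdiag_zero (A : Matrix (Fin n) (Fin n) ℝ) :
    ∫ ω, (∑ p ∈ Finset.univ.offDiag, A p.1 p.2 * (v ω p.1 * v ω p.2)) ∂μ = 0 := by
  rw [integral_finset_sum _ (fun p _ =>
    (integrable_mul2 (mem2_of_mem4 (h4 p.1)) (mem2_of_mem4 (h4 p.2))).const_mul _)]
  apply Finset.sum_eq_zero
  intro p hp
  have hp' := Finset.mem_offDiag.mp hp
  rw [integral_const_mul]
  have hind : IndepFun (fun ω => v ω p.1) (fun ω => v ω p.2) μ := hv.indepFun hp'.2.2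
  have h := hind.integral_mul_eq_mul_integral ((h4 p.1).integrable (by norm_num)).aestronglyMeasurable
    ((h4 p.2).integrable (by norm_num)).aestronglyMeasurable
  have e : ((fun ω => v ω p.1) * fun ω => v ω p.2)
      = fun ω => v ω p.1 * v ω p.2 := rfl
  rw [e] at h
  rw [h, h1 p.1, zero_mul, mul_zero]

include h4 in
lemma memℒp_offdiag_two (A : Matrix (Fin n) (Fin n) ℝ) :
    MemLp (fun ω => ∑ p ∈ Finset.univ.offDiag, A p.1 p.2 * (v ω p.1 * v ω p.2)) 2 μ :=
  memLp_finsetSum _ (fun p _ => (memℒp_mul4 (h4 p.1) (h4 p.2)).const_mul _)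

include h4 in
lemma memℒp_sq_two (i : Fin n) : MemLp (fun ω => (v ω i) ^ 2) 2 μ := by
  have h := memℒp_mul4 (h4 i) (h4 i)
  rw [show (fun ω => (v ω i) ^ 2) = fun ω => v ω i * v ω i from funext fun ω => sq (v ω i)]
  exact h

include h4 in
lemma memℒp_diag_two (A : Matrix (Fin n) (Fin n) ℝ) :
    MemLp (fun ω => ∑ i, A i i * (v ω i) ^ 2) 2 μ :=
  memLp_finsetSum _ (fun i _ => (memℒp_sq_two h4 i).const_mul _)

include hm hv h4 h1 in
lemma integral_diag_mul_offdiag (A : Matrix (Fin n) (Fin n) ℝ) :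
    ∫ ω, (∑ i, A i i * (v ω i) ^ 2)
        * (∑ p ∈ Finset.univ.offDiag, A p.1 p.2 * (v ω p.1 * v ω p.2)) ∂μ = 0 := by
  classical
  have expand : (fun ω => (∑ i, A i i * (v ω i) ^ 2)
        * (∑ p ∈ Finset.univ.offDiag, A p.1 p.2 * (v ω p.1 * v ω p.2)))
      = fun ω => ∑ x ∈ Finset.univ ×ˢ Finset.univ.offDiag,
          (A x.1 x.1 * A x.2.1 x.2.2) * (v ω x.1 * v ω x.1 * (v ω x.2.1 * v ω x.2.2)) := by
    funext ω
    rw [Finset.sum_mul_sum, ← Finset.sum_product']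
    exact Finset.sum_congr rfl fun x _ => by ring
  rw [expand, integral_finset_sum _
    (fun x _ => (integrable_four hm hv h4 (a := x.1) (b := x.1) (c := x.2.1)
      (m := x.2.2)).const_mul _)]
  apply Finset.sum_eq_zero
  intro x hx
  have hx' : x.2 ∈ Finset.univ.offDiag := (Finset.mem_product.mp hx).2
  have hne : x.2.1 ≠ x.2.2 := (Finset.mem_offDiag.mp hx').2.2
  rw [integral_const_mul]
  have hzero : ∫ ω, v ω x.1 * v ω x.1 * (v ω x.2.1 * v ω x.2.2) ∂μ = 0 := by
    by_cases hc : x.1 = x.2.2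
    · rw [show (fun ω => v ω x.1 * v ω x.1 * (v ω x.2.1 * v ω x.2.2))
          = fun ω => v ω x.1 * v ω x.1 * (v ω x.2.2 * v ω x.2.1) from
        funext fun ω => by ring]
      refine integral_four_zero' hm hv h4 h1 ?_ ?_ ?_
      · rw [hc]; exact Ne.symm hne
      · rw [hc]; exact Ne.symm hne
      · exact Ne.symm hne
    · exact integral_four_zero' hm hv h4 h1 hc hc hne
  rw [hzero, mul_zero]

end Moments

lemma variance_fun_const_add (c : ℝ) {G : Ω → ℝ} (hG : Integrable G μ) :
    variance (fun ω => c + G ω) μ = variance G μ := by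
  have hmean : ∫ ω, (c + G ω) ∂μ = c + ∫ ω, G ω ∂μ := by
    rw [integral_add (integrable_const c) hG, integral_const]
    simp
  simp only [ProbabilityTheory.variance, ProbabilityTheory.evariance, hmean]
  congr 1
  apply lintegral_congr
  intro ω
  have e : c + G ω - (c + ∫ ω, G ω ∂μ) = G ω - ∫ ω, G ω ∂μ := by ring
  rw [e]

lemma abstract_upper {G : Ω → ℝ} (c : ℝ) (hG2 : MemLp G 2 μ) {S : ℝ}
    (hGsq : ∫ ω, G ω ^ 2 ∂μ = S) :
    variance (fun ω => c + G ω) μ ≤ S := by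
  rw [variance_fun_const_add c (hG2.integrable one_le_two)]
  refine le_trans (variance_le_expectation_sq hG2.aestronglyMeasurable) ?_
  rw [← hGsq]
  rfl

lemma abstract_lower {D G : Ω → ℝ} (hD2 : MemLp D 2 μ) (hG2 : MemLp G 2 μ)
    (hDG : ∫ ω, D ω * G ω ∂μ = 0) (hGmean : ∫ ω, G ω ∂μ = 0) {S : ℝ}
    (hGsq : ∫ ω, G ω ^ 2 ∂μ = S) :
    S ≤ variance (fun ω => D ω + G ω) μ := by
  have hf2 : MemLp (fun ω => D ω + G ω) 2 μ := hD2.add hG2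
  rw [variance_eq_sub hf2]
  have hmean : μ[fun ω => D ω + G ω] = μ[D] := by
    rw [integral_add (hD2.integrable one_le_two) (hG2.integrable one_le_two), hGmean,
      add_zero]
  have hsq : μ[(fun ω => D ω + G ω) ^ 2] = μ[fun ω => D ω ^ 2] + ∫ ω, G ω ^ 2 ∂μ := by
    have e : μ[(fun ω => D ω + G ω) ^ 2]
        = ∫ ω, (D ω ^ 2 + (2 * (D ω * G ω) + G ω ^ 2)) ∂μ :=
      integral_congr_ae (Filter.Eventually.of_forall fun ω => by
        simp only [Pi.pow_apply]; ring)
    have hg : Integrable (fun ω => 2 * (D ω * G ω) + G ω ^ 2) μ :=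
      ((integrable_mul2 hD2 hG2).const_mul 2).add hG2.integrable_sq
    have hg1 : Integrable (fun ω => 2 * (D ω * G ω)) μ :=
      (integrable_mul2 hD2 hG2).const_mul 2
    rw [e, integral_add hD2.integrable_sq hg, integral_add hg1 hG2.integrable_sq,
      integral_const_mul, hDG, mul_zero, zero_add]
  rw [hsq, hmean, hGsq]
  have hvD := variance_eq_sub hD2
  have hDsq_eq : μ[D ^ 2] = μ[fun ω => D ω ^ 2] := rfl
  rw [hDsq_eq] at hvD
  have hnn := variance_nonneg D μ
  linarith

end Core


section Main

open Matrix

variable {Ω : Type*} [MeasurableSpace Ω] {μ : Measure Ω} [IsProbabilityMeasure μ] {n : ℕ}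

lemma dotProduct_expand (A : Matrix (Fin n) (Fin n) ℝ) (x : Fin n → ℝ) :
    x ⬝ᵥ A.mulVec x = (∑ i, A i i * (x i) ^ 2)
      + ∑ p ∈ Finset.univ.offDiag, A p.1 p.2 * (x p.1 * x p.2) := by
  classical
  have h : x ⬝ᵥ A.mulVec x
      = ∑ q ∈ Finset.univ ×ˢ Finset.univ, A q.1 q.2 * (x q.1 * x q.2) := by
    rw [Finset.sum_product]
    simp only [dotProduct, Matrix.mulVec, Finset.mul_sum]
    exact Finset.sum_congr rfl fun i _ => Finset.sum_congr rfl fun j _ => by ring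
  rw [h, ← Finset.diag_union_offDiag (Finset.univ),
    Finset.sum_union (Finset.disjoint_diag_offDiag _), Finset.sum_diag]
  congr 1
  exact Finset.sum_congr rfl fun i _ => by ring

lemma rademacher_memℒp4 {u : Ω → Fin n → ℝ} (humeas : ∀ i, Measurable fun ω => u ω i)
    (huval : ∀ ω i, u ω i = 1 ∨ u ω i = -1) (i : Fin n) :
    MemLp (fun ω => u ω i) 4 μ := by
  refine (memLp_top_of_bound (humeas i).aestronglyMeasurable 1
    (Filter.Eventually.of_forall fun ω => ?_)).mono_exponent le_top
  rcases huval ω i with h | h <;> rw [h] <;> simp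

lemma rademacher_mean {u : Ω → Fin n → ℝ} (humeas : ∀ i, Measurable fun ω => u ω i)
    (huval : ∀ ω i, u ω i = 1 ∨ u ω i = -1)
    (hudist : ∀ i, μ {ω | u ω i = 1} = 1 / 2) (i : Fin n) :
    ∫ ω, u ω i ∂μ = 0 := by
  have hset : MeasurableSet {ω | u ω i = 1} := (humeas i) (measurableSet_singleton 1)
  have hfun : (fun ω => u ω i)
      = fun ω => Set.indicator {ω | u ω i = 1} (fun _ => (2:ℝ)) ω - 1 := by
    funext ω
    rcases huval ω i with h | h
    · rw [Set.indicator_of_mem (by exact h), h]; norm_num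
    · have hnm : ω ∉ {ω | u ω i = 1} := by
        simp only [Set.mem_setOf_eq, h]
        norm_num
      rw [Set.indicator_of_notMem hnm, h]; norm_num
  rw [hfun, integral_sub ((integrable_const (2:ℝ)).indicator hset) (integrable_const 1),
    integral_indicator_const _ hset, integral_const, measureReal_def, hudist i]
  simp only [measure_univ, ENNReal.toReal_one, smul_eq_mul, one_mul]
  rw [show ((1:ℝ≥0∞)/2).toReal = (1:ℝ)/2 by simp]
  norm_num

lemma rademacher_sq {u : Ω → Fin n → ℝ}
    (huval : ∀ ω i, u ω i = 1 ∨ u ω i = -1) (i : Fin n) :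
    ∫ ω, (u ω i) ^ 2 ∂μ = 1 := by
  have hfun : (fun ω => (u ω i) ^ 2) = fun _ => (1:ℝ) := by
    funext ω
    rcases huval ω i with h | h <;> rw [h] <;> norm_num
  rw [hfun, integral_const]
  simp

lemma gaussian_memℒp4 {w : Ω → Fin n → ℝ} (hwmeas : ∀ i, Measurable fun ω => w ω i)
    (hwdist : ∀ i, Measure.map (fun ω => w ω i) μ = gaussianReal 0 1) (i : Fin n) :
    MemLp (fun ω => w ω i) 4 μ := by
  have h : MemLp (id : ℝ → ℝ) 4 (Measure.map (fun ω => w ω i) μ) := by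
    rw [hwdist i]; exact memℒp_id_four_gauss
  exact (memLp_map_measure_iff aestronglyMeasurable_id
    (hwmeas i).aemeasurable).mp h

lemma gaussian_mean {w : Ω → Fin n → ℝ} (hwmeas : ∀ i, Measurable fun ω => w ω i)
    (hwdist : ∀ i, Measure.map (fun ω => w ω i) μ = gaussianReal 0 1) (i : Fin n) :
    ∫ ω, w ω i ∂μ = 0 := by
  have h := integral_map (μ := μ) (φ := fun ω => w ω i) (hwmeas i).aemeasurable
    (f := fun x : ℝ => x) (by exact aestronglyMeasurable_id)
  rw [hwdist i, integral_gauss01_id] at h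
  exact h.symm

lemma gaussian_sq {w : Ω → Fin n → ℝ} (hwmeas : ∀ i, Measurable fun ω => w ω i)
    (hwdist : ∀ i, Measure.map (fun ω => w ω i) μ = gaussianReal 0 1) (i : Fin n) :
    ∫ ω, (w ω i) ^ 2 ∂μ = 1 := by
  have h := integral_map (μ := μ) (φ := fun ω => w ω i) (hwmeas i).aemeasurable
    (f := fun x : ℝ => x ^ 2) ((measurable_id.pow_const 2).aestronglyMeasurable)
  rw [hwdist i, integral_gauss01_sq] at h
  exact h.symm

end Main

/-- For any symmetric matrix `A`, the variance of the Hutchinson estimator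
`vᵀ A v` with i.i.d. Rademacher(1/2) entries is at most the variance of the
estimator with i.i.d. standard Gaussian entries. -/
theorem hutchinson_rademacher_le_gaussian {Ω : Type*} [MeasurableSpace Ω]
    (μ : Measure Ω) [IsProbabilityMeasure μ] {n : ℕ} (u w : Ω → Fin n → ℝ)
    (A : Matrix (Fin n) (Fin n) ℝ) (hA : A.IsSymm)
    (humeas : ∀ i, Measurable fun ω => u ω i)
    (huval : ∀ ω i, u ω i = 1 ∨ u ω i = -1)
    (hudist : ∀ i, μ {ω | u ω i = 1} = 1 / 2)
    (huindep : iIndepFun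
      (fun i ω => u ω i) μ)
    (hwmeas : ∀ i, Measurable fun ω => w ω i)
    (hwdist : ∀ i, Measure.map (fun ω => w ω i) μ = gaussianReal 0 1)
    (hwindep : iIndepFun
      (fun i ω => w ω i) μ) :
    variance (fun ω => u ω ⬝ᵥ A.mulVec (u ω)) μ ≤
      variance (fun ω => w ω ⬝ᵥ A.mulVec (w ω)) μ := by
  classical
  have hu4 : ∀ i, MemLp (fun ω => u ω i) 4 μ := rademacher_memℒp4 humeas huval
  have hu1 : ∀ i, ∫ ω, u ω i ∂μ = 0 := rademacher_mean humeas huval hudist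
  have hu2 : ∀ i, ∫ ω, (u ω i) ^ 2 ∂μ = 1 := rademacher_sq huval
  have hw4 : ∀ i, MemLp (fun ω => w ω i) 4 μ := gaussian_memℒp4 hwmeas hwdist
  have hw1 : ∀ i, ∫ ω, w ω i ∂μ = 0 := gaussian_mean hwmeas hwdist
  have hw2 : ∀ i, ∫ ω, (w ω i) ^ 2 ∂μ = 1 := gaussian_sq hwmeas hwdist
  have hexp_u : (fun ω => u ω ⬝ᵥ A.mulVec (u ω))
      = fun ω => (∑ i, A i i)
          + ∑ p ∈ Finset.univ.offDiag, A p.1 p.2 * (u ω p.1 * u ω p.2) := by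
    funext ω
    rw [dotProduct_expand]
    congr 1
    refine Finset.sum_congr rfl fun i _ => ?_
    rcases huval ω i with h | h <;> rw [h] <;> norm_num
  have hexp_w : (fun ω => w ω ⬝ᵥ A.mulVec (w ω))
      = fun ω => (∑ i, A i i * (w ω i) ^ 2)
          + ∑ p ∈ Finset.univ.offDiag, A p.1 p.2 * (w ω p.1 * w ω p.2) :=
    funext fun ω => dotProduct_expand A (w ω)
  rw [hexp_u, hexp_w]
  have hGu := integral_offdiag_sq humeas huindep hu4 hu1 hu2 A
  have hGw := integral_offdiag_sq hwmeas hwindep hw4 hw1 hw2 A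
  refine le_trans (abstract_upper _ (memℒp_offdiag_two hu4 A) hGu) ?_
  exact abstract_lower (memℒp_diag_two hw4 A) (memℒp_offdiag_two hw4 A)
    (integral_diag_mul_offdiag hwmeas hwindep hw4 hw1 A)
    (integral_offdiag_zero hwindep hw4 hw1 A) hGw
end

section
/- The expected joint negative log-likelihood of (y, z) under the conditional law z | y with parameters θ₀ equals (1/2)tr[(S(θ)^{-1} + R(θ)^{-1})(S(θ₀)^{-1} + R(θ₀)^{-1})^{-1}] + ℓ_{S(θ)}(ẑ(θ₀)) + ℓ_{R(θ)}(y − ẑ(θ₀)), where ẑ(θ₀) = (S(θ₀)^{-1} + R(θ₀)^{-1})^{-1} R(θ₀)^{-1} y and ℓ_A(u) is the standard Gaussian negative log-likelihood with covariance A. -/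
open Matrix MeasureTheory

/-- The multivariate Gaussian density with mean `m` and covariance `C`. -/
noncomputable def gaussianPdf {ι : Type*} [Fintype ι] [DecidableEq ι] (m : ι → ℝ)
    (C : Matrix ι ι ℝ) (x : ι → ℝ) : ℝ :=
  (Real.sqrt ((2 * Real.pi) ^ (Fintype.card ι) * C.det))⁻¹ *
    Real.exp (-((x - m) ⬝ᵥ C⁻¹.mulVec (x - m)) / 2)

/-- The standard Gaussian negative log-likelihood with covariance `A`:
`ℓ_A(u) = (1/2)(log det(2πA) + uᵀ A⁻¹ u)`. -/
noncomputable def nll {n : ℕ} (A : Matrix (Fin n) (Fin n) ℝ) (u : Fin n → ℝ) : ℝ :=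
  (1 / 2) * (Real.log ((2 * Real.pi) ^ n * A.det) + u ⬝ᵥ A⁻¹.mulVec u)

open Real
noncomputable def g1 (x : ℝ) : ℝ := Real.exp (-(1/2 : ℝ) * x ^ 2)

lemma int_g1 : Integrable g1 := integrable_exp_neg_mul_sq (by norm_num)

lemma int_xg1 : Integrable (fun x => x * g1 x) := by
  have := integrable_rpow_mul_exp_neg_mul_sq (b := 1/2) (by norm_num) (s := 1) (by norm_num)
  simpa [g1, Real.rpow_one] using this

lemma int_x2g1 : Integrable (fun x => x ^ 2 * g1 x) := by
  have := integrable_rpow_mul_exp_neg_mul_sq (b := 1/2) (by norm_num) (s := 2) (by norm_num)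
  have h2 : ∀ x : ℝ, x ^ (2:ℝ) = x ^ 2 := fun x => by
    rw [show (2:ℝ) = ((2:ℕ):ℝ) by norm_num, Real.rpow_natCast]
  simpa [g1, h2] using this

lemma I0 : ∫ x : ℝ, g1 x = Real.sqrt (2 * Real.pi) := by
  have := integral_gaussian (1/2)
  simp only [g1]
  rw [this]
  norm_num [div_div_eq_mul_div, mul_comm]

lemma I1 : ∫ x : ℝ, x * g1 x = 0 := by
  have h := integral_neg_eq_self (fun x : ℝ => x * g1 x) volume
  have h2 : ∫ x : ℝ, (fun x => x * g1 x) (-x) = -∫ x : ℝ, x * g1 x := by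
    simp only [g1, neg_sq, neg_mul]
    rw [integral_neg]
  rw [h2] at h
  linarith

lemma deriv_g1 (t : ℝ) : HasDerivAt g1 (-t * g1 t) t := by
  have hu : HasDerivAt (fun t : ℝ => -(1/2 : ℝ) * t ^ 2) (-t) t := by
    have := (hasDerivAt_pow 2 t).const_mul (-(1/2 : ℝ))
    refine this.congr_deriv ?_
    push_cast
    ring
  have h2 : HasDerivAt g1 (Real.exp (-(1/2:ℝ) * t ^ 2) * -t) t := hu.exp
  have h3 : Real.exp (-(1/2:ℝ) * t ^ 2) * -t = -t * g1 t := by simp only [g1]; ring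
  rwa [h3] at h2

lemma tendsto_xg1 : Filter.Tendsto (fun t : ℝ => -t * g1 t) Filter.atTop (nhds 0) := by
  have h := rpow_mul_exp_neg_mul_sq_isLittleO_exp_neg (b := 1/2) (by norm_num) 1
  have hexp : Filter.Tendsto (fun x : ℝ => Real.exp (-(1/2) * x)) Filter.atTop (nhds 0) := by
    apply Real.tendsto_exp_atBot.comp
    exact Filter.Tendsto.const_mul_atTop_of_neg (by norm_num) Filter.tendsto_id
  have h2 : Filter.Tendsto (fun x : ℝ => x ^ (1:ℝ) * Real.exp (-(1/2) * x ^ 2))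
      Filter.atTop (nhds 0) :=
    h.trans_tendsto hexp
  have h3 : Filter.Tendsto (fun t : ℝ => t * g1 t) Filter.atTop (nhds 0) := by
    refine h2.congr fun x => ?_
    simp [g1, Real.rpow_one]
  simpa using h3.neg

lemma int_Ioi : ∫ t in Set.Ioi (0:ℝ), (t ^ 2 - 1) * g1 t = 0 := by
  have hderiv : ∀ t ∈ Set.Ioi (0:ℝ), HasDerivAt (fun t => -t * g1 t) ((t ^ 2 - 1) * g1 t) t := by
    intro t _
    have := (hasDerivAt_neg t).mul (deriv_g1 t)
    refine this.congr_deriv ?_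
    ring
  have hint : IntegrableOn (fun t : ℝ => (t ^ 2 - 1) * g1 t) (Set.Ioi 0) := by
    have : Integrable (fun t : ℝ => (t ^ 2 - 1) * g1 t) := by
      have := int_x2g1.sub int_g1
      refine this.congr ?_
      filter_upwards with x
      simp only [Pi.sub_apply]
      ring
    exact this.integrableOn
  have hcont : ContinuousWithinAt (fun t : ℝ => -t * g1 t) (Set.Ici 0) 0 := by
    apply Continuous.continuousWithinAt
    unfold g1
    continuity
  have := integral_Ioi_of_hasDerivAt_of_tendsto hcont hderiv hint tendsto_xg1
  simpa using this

lemma I2 : ∫ x : ℝ, x ^ 2 * g1 x = Real.sqrt (2 * Real.pi) := by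
  have e1 : ∫ x : ℝ, x ^ 2 * g1 x = 2 * ∫ x in Set.Ioi (0:ℝ), x ^ 2 * g1 x := by
    rw [← integral_comp_abs (f := fun x => x ^ 2 * g1 x)]
    congr 1
    ext x
    simp [g1, sq_abs]
  have e2 : ∫ x : ℝ, g1 x = 2 * ∫ x in Set.Ioi (0:ℝ), g1 x := by
    rw [← integral_comp_abs (f := fun x => g1 x)]
    congr 1
    ext x
    simp [g1, sq_abs]
  have hx2 : IntegrableOn (fun x : ℝ => x ^ 2 * g1 x) (Set.Ioi 0) := int_x2g1.integrableOn
  have hg : IntegrableOn (fun x : ℝ => g1 x) (Set.Ioi 0) := int_g1.integrableOn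
  have key : ∫ x in Set.Ioi (0:ℝ), x ^ 2 * g1 x = ∫ x in Set.Ioi (0:ℝ), g1 x := by
    have := int_Ioi
    rw [show (fun t : ℝ => (t ^ 2 - 1) * g1 t) = fun t : ℝ => t ^ 2 * g1 t - g1 t by
      ext t; ring] at this
    rw [integral_sub hx2 hg] at this
    linarith
  rw [e1, key, ← e2, I0]

noncomputable def GG {n : ℕ} (w : Fin n → ℝ) : ℝ := ∏ i, g1 (w i)

lemma int_GG {n : ℕ} : Integrable (GG (n := n)) :=
  Integrable.fintype_prod (f := fun _ : Fin n => g1) (fun _ => int_g1)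

lemma prod_ident {n : ℕ} (i j : Fin n) (w : Fin n → ℝ) :
    (∏ k, (g1 (w k) * ((if k = i then w k else 1) * (if k = j then w k else 1)))) =
      GG w * (w i * w j) := by
  rw [Finset.prod_mul_distrib, Finset.prod_mul_distrib]
  simp [GG, Finset.prod_ite_eq', mul_assoc]

lemma prod_ident1 {n : ℕ} (i : Fin n) (w : Fin n → ℝ) :
    (∏ k, (g1 (w k) * (if k = i then w k else 1))) = GG w * w i := by
  rw [Finset.prod_mul_distrib]
  simp [GG, Finset.prod_ite_eq']

lemma int_GG1 {n : ℕ} (i : Fin n) : Integrable (fun w : Fin n → ℝ => GG w * w i) := by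
  have := Integrable.fintype_prod (μ := fun _ => volume)
    (f := fun k : Fin n => fun x : ℝ => g1 x * (if k = i then x else 1)) (fun k => by
      by_cases h : k = i
      · simp only [h, eq_self_iff_true, if_true]
        simpa [mul_comm] using int_xg1
      · simp only [if_neg h, mul_one]
        exact int_g1)
  refine this.congr ?_
  filter_upwards with w
  exact prod_ident1 i w

lemma int_GG2 {n : ℕ} (i j : Fin n) : Integrable (fun w : Fin n → ℝ => GG w * (w i * w j)) := by
  have := Integrable.fintype_prod
    (f := fun k : Fin n => fun x : ℝ =>
      g1 x * ((if k = i then x else 1) * (if k = j then x else 1))) (fun k => by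
      by_cases hi : k = i
      · by_cases hj : k = j
        · simp only [if_pos hi, if_pos hj]
          rw [show (fun x : ℝ => g1 x * (x * x)) = fun x : ℝ => x ^ 2 * g1 x by ext x; ring]
          exact int_x2g1
        · simp only [if_pos hi, if_neg hj, mul_one]
          rw [show (fun x : ℝ => g1 x * x) = fun x : ℝ => x * g1 x by ext x; ring]
          exact int_xg1
      · by_cases hj : k = j
        · simp only [if_neg hi, if_pos hj, one_mul]
          rw [show (fun x : ℝ => g1 x * x) = fun x : ℝ => x * g1 x by ext x; ring]
          exact int_xg1
        · simp only [if_neg hi, if_neg hj, mul_one]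
          exact int_g1)
  refine this.congr ?_
  filter_upwards with w
  exact prod_ident i j w

lemma M0 {n : ℕ} : ∫ w : Fin n → ℝ, GG w = Real.sqrt (2 * Real.pi) ^ n := by
  rw [show (fun w : Fin n → ℝ => GG w) = fun w => ∏ i, g1 (w i) from rfl]
  rw [MeasureTheory.volume_pi, MeasureTheory.integral_fintype_prod_eq_pow (ι := Fin n) g1, I0]
  simp

lemma M1 {n : ℕ} (i : Fin n) : ∫ w : Fin n → ℝ, GG w * w i = 0 := by
  have key := MeasureTheory.integral_fintype_prod_eq_prod (ι := Fin n) (μ := fun _ => volume)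
    (fun k (x : ℝ) => g1 x * (if k = i then x else 1))
  have lhs_eq : ∫ w : Fin n → ℝ, GG w * w i =
      ∏ k, ∫ x : ℝ, g1 x * (if k = i then x else 1) := by
    rw [← key]
    congr 1
    ext w
    exact (prod_ident1 i w).symm
  rw [lhs_eq]
  apply Finset.prod_eq_zero (Finset.mem_univ i)
  simp only [eq_self_iff_true, if_true]
  rw [show (fun x : ℝ => g1 x * x) = fun x : ℝ => x * g1 x by ext x; ring]
  exact I1

lemma M2 {n : ℕ} (i j : Fin n) :
    ∫ w : Fin n → ℝ, GG w * (w i * w j) =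
      (if i = j then 1 else 0) * Real.sqrt (2 * Real.pi) ^ n := by
  have key := MeasureTheory.integral_fintype_prod_eq_prod (ι := Fin n) (μ := fun _ => volume)
    (fun k (x : ℝ) => g1 x * ((if k = i then x else 1) * (if k = j then x else 1)))
  have lhs_eq : ∫ w : Fin n → ℝ, GG w * (w i * w j) =
      ∏ k, ∫ x : ℝ, g1 x * ((if k = i then x else 1) * (if k = j then x else 1)) := by
    rw [← key]
    congr 1
    ext w
    exact (prod_ident i j w).symm
  rw [lhs_eq]
  by_cases hij : i = j
  · subst hij
    rw [if_pos rfl, one_mul]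
    have heach : ∀ k : Fin n,
        (∫ x : ℝ, g1 x * ((if k = i then x else 1) * (if k = i then x else 1)))
        = Real.sqrt (2 * Real.pi) := by
      intro k
      by_cases h : k = i
      · simp only [h, eq_self_iff_true, if_true]
        rw [show (fun x : ℝ => g1 x * (x * x)) = fun x : ℝ => x ^ 2 * g1 x by ext x; ring]
        exact I2
      · simp only [if_neg h, mul_one]
        exact I0
    simp_rw [heach]
    simp
  · rw [if_neg hij, zero_mul]
    apply Finset.prod_eq_zero (Finset.mem_univ i)
    simp only [eq_self_iff_true, if_true, if_neg hij, mul_one]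
    rw [show (fun x : ℝ => g1 x * x) = fun x : ℝ => x * g1 x by ext x; ring]
    exact I1

lemma std_lemma {n : ℕ} (C : ℝ) (v : Fin n → ℝ) (N : Matrix (Fin n) (Fin n) ℝ) :
    ∫ w : Fin n → ℝ, GG w * (C + v ⬝ᵥ w + w ⬝ᵥ N.mulVec w / 2) =
      Real.sqrt (2 * Real.pi) ^ n * (C + N.trace / 2) := by
  have hsplit : ∀ w : Fin n → ℝ, GG w * (C + v ⬝ᵥ w + w ⬝ᵥ N.mulVec w / 2) =
      C * GG w + (∑ i, v i * (GG w * w i)) +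
        ∑ i, ∑ j, (N i j / 2) * (GG w * (w i * w j)) := by
    intro w
    have h1 : GG w * (v ⬝ᵥ w) = ∑ i, v i * (GG w * w i) := by
      simp only [dotProduct, Finset.mul_sum]
      congr 1; ext i; ring
    have h2 : GG w * (w ⬝ᵥ N.mulVec w / 2) =
        ∑ i, ∑ j, (N i j / 2) * (GG w * (w i * w j)) := by
      simp only [dotProduct, Matrix.mulVec, Finset.mul_sum, Finset.sum_div, Finset.sum_mul]
      refine Finset.sum_congr rfl fun i _ => Finset.sum_congr rfl fun j _ => by ring
    calc GG w * (C + v ⬝ᵥ w + w ⬝ᵥ N.mulVec w / 2)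
        = C * GG w + GG w * (v ⬝ᵥ w) + GG w * (w ⬝ᵥ N.mulVec w / 2) := by ring
      _ = _ := by rw [h1, h2]
  have i1 : Integrable (fun w : Fin n → ℝ => C * GG w) := int_GG.const_mul C
  have i2 : Integrable (fun w : Fin n → ℝ => ∑ i, v i * (GG w * w i)) :=
    integrable_finset_sum _ fun i _ => (int_GG1 i).const_mul _
  have i3 : Integrable (fun w : Fin n → ℝ =>
      ∑ i, ∑ j, (N i j / 2) * (GG w * (w i * w j))) :=
    integrable_finset_sum _ fun i _ =>
      integrable_finset_sum _ fun j _ => (int_GG2 i j).const_mul _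
  rw [integral_congr_ae (Filter.Eventually.of_forall hsplit)]
  have i12 : Integrable (fun w : Fin n → ℝ =>
      C * GG w + ∑ i, v i * (GG w * w i)) := i1.add i2
  rw [integral_add i12 i3, integral_add i1 i2]
  rw [integral_const_mul, M0]
  rw [integral_finset_sum _ fun i _ => (int_GG1 i).const_mul _]
  simp_rw [integral_const_mul, M1, mul_zero, Finset.sum_const_zero]
  rw [integral_finset_sum _ fun i _ =>
    integrable_finset_sum _ fun j _ => (int_GG2 i j).const_mul _]
  have : ∀ i : Fin n, ∫ w : Fin n → ℝ, ∑ j, (N i j / 2) * (GG w * (w i * w j)) =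
      (N i i / 2) * Real.sqrt (2 * Real.pi) ^ n := by
    intro i
    rw [integral_finset_sum _ fun j _ => (int_GG2 i j).const_mul _]
    simp_rw [integral_const_mul, M2]
    rw [Finset.sum_eq_single i]
    · simp
    · intro j _ hj
      rw [if_neg (Ne.symm hj)]
      ring
    · intro h; exact absurd (Finset.mem_univ i) h
  simp_rw [this]
  rw [Matrix.trace]
  simp only [Matrix.diag]
  rw [← Finset.sum_mul, ← Finset.sum_div]
  ring

lemma integral_comp_mulVec_add {n : ℕ} (M : Matrix (Fin n) (Fin n) ℝ) (hM : M.det ≠ 0)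
    (μ : Fin n → ℝ) (f : (Fin n → ℝ) → ℝ) (hf : Continuous f) :
    ∫ z : Fin n → ℝ, f z = |M.det| * ∫ w : Fin n → ℝ, f (M.mulVec w + μ) := by
  have h1 : ∫ z : Fin n → ℝ, f z = ∫ z : Fin n → ℝ, f (z + μ) :=
    (integral_add_right_eq_self f μ).symm
  have hmap := Real.map_matrix_volume_pi_eq_smul_volume_pi (M := M) hM
  have hcont : Continuous fun z : Fin n → ℝ => f (z + μ) :=
    hf.comp (continuous_id.add continuous_const)
  have h2 : ∫ z, f (z + μ) ∂(Measure.map (Matrix.toLin' M) volume) =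
      ∫ w : Fin n → ℝ, f (M.mulVec w + μ) := by
    rw [integral_map (Matrix.toLin' M).continuous_of_finiteDimensional.measurable.aemeasurable
      (hcont.aestronglyMeasurable.mono_ac (Measure.AbsolutelyContinuous.refl _))]
    · simp_rw [Matrix.toLin'_apply]
  rw [h1, ← h2, hmap, integral_smul_measure, ENNReal.toReal_ofReal (abs_nonneg _),
    smul_eq_mul, ← mul_assoc, abs_inv, mul_inv_cancel₀ (abs_ne_zero.mpr hM), one_mul]

lemma sqrt_two_pi_pow (n : ℕ) : Real.sqrt ((2 * Real.pi) ^ n) = Real.sqrt (2 * Real.pi) ^ n := by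
  induction n with
  | zero => simp
  | succ k ih =>
    rw [pow_succ, pow_succ, Real.sqrt_mul (pow_nonneg (by positivity) k), ih]

open scoped MatrixOrder in
lemma master {n : ℕ} (μ : Fin n → ℝ) (Sg : Matrix (Fin n) (Fin n) ℝ) (hSg : Sg.PosDef)
    (C : ℝ) (v : Fin n → ℝ) (N : Matrix (Fin n) (Fin n) ℝ) :
    ∫ z : Fin n → ℝ, gaussianPdf μ Sg z *
        (C + v ⬝ᵥ (z - μ) + (z - μ) ⬝ᵥ N.mulVec (z - μ) / 2) =
      C + (N * Sg).trace / 2 := by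
  classical
  set L := CFC.sqrt Sg with hLdef
  have hLL : L * L = Sg := CFC.sqrt_mul_sqrt_self Sg hSg.posSemidef.nonneg
  have hLsym : L.transpose = L := by
    have := (CFC.sqrt_nonneg Sg).posSemidef.isHermitian
    simpa [Matrix.IsHermitian, Matrix.conjTranspose_eq_transpose_of_trivial] using this
  have hdetSg : 0 < Sg.det := hSg.det_pos
  have hdetL2 : L.det * L.det = Sg.det := by
    rw [← Matrix.det_mul, hLL]
  have hdetL : L.det ≠ 0 := by
    intro h
    rw [h, mul_zero] at hdetL2
    exact absurd hdetL2.symm (ne_of_gt hdetSg)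
  -- continuity of the integrand
  have hcont : Continuous fun z : Fin n → ℝ => gaussianPdf μ Sg z *
      (C + v ⬝ᵥ (z - μ) + (z - μ) ⬝ᵥ N.mulVec (z - μ) / 2) := by
    have hsub : Continuous fun z : Fin n → ℝ => z - μ := continuous_id.sub continuous_const
    have h1 : Continuous fun z : Fin n → ℝ => (z - μ) ⬝ᵥ Sg⁻¹.mulVec (z - μ) :=
      hsub.dotProduct (continuous_const.matrix_mulVec hsub)
    have h2 : Continuous fun z : Fin n → ℝ => v ⬝ᵥ (z - μ) :=
      continuous_const.dotProduct hsub
    have h3 : Continuous fun z : Fin n → ℝ => (z - μ) ⬝ᵥ N.mulVec (z - μ) :=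
      hsub.dotProduct (continuous_const.matrix_mulVec hsub)
    unfold gaussianPdf
    exact ((continuous_const.mul ((h1.neg.div_const 2).rexp))).mul
      ((continuous_const.add h2).add (h3.div_const 2))
  rw [integral_comp_mulVec_add L hdetL μ _ hcont]
  -- pointwise simplification
  have hLML : ∀ (A : Matrix (Fin n) (Fin n) ℝ) (w : Fin n → ℝ),
      (L.mulVec w) ⬝ᵥ A.mulVec (L.mulVec w) = w ⬝ᵥ (L * A * L).mulVec w := by
    intro A w
    rw [Matrix.mulVec_mulVec, dotProduct_comm, Matrix.dotProduct_mulVec,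
      ← Matrix.mulVec_transpose, hLsym, Matrix.mulVec_mulVec, ← Matrix.mul_assoc,
      dotProduct_comm]
  have hquad : ∀ w : Fin n → ℝ, (L.mulVec w) ⬝ᵥ Sg⁻¹.mulVec (L.mulVec w) = w ⬝ᵥ w := by
    intro w
    rw [hLML]
    have hu : IsUnit L.det := isUnit_iff_ne_zero.mpr hdetL
    have : L * Sg⁻¹ * L = 1 := by
      rw [← hLL, Matrix.mul_inv_rev, ← Matrix.mul_assoc, Matrix.mul_nonsing_inv _ hu,
        Matrix.one_mul, Matrix.nonsing_inv_mul _ hu]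
    rw [this, Matrix.one_mulVec]
  have exp_GG : ∀ w : Fin n → ℝ, Real.exp (-(w ⬝ᵥ w) / 2) = GG w := by
    intro w
    rw [GG]
    simp only [g1]
    rw [← Real.exp_sum]
    congr 1
    rw [dotProduct, neg_div, Finset.sum_div, ← Finset.sum_neg_distrib]
    exact Finset.sum_congr rfl fun i _ => by ring
  set c0 : ℝ := (Real.sqrt ((2 * Real.pi) ^ (Fintype.card (Fin n)) * Sg.det))⁻¹ with hc0
  have point : ∀ w : Fin n → ℝ,
      gaussianPdf μ Sg (L.mulVec w + μ) *
        (C + v ⬝ᵥ (L.mulVec w + μ - μ) + (L.mulVec w + μ - μ) ⬝ᵥ N.mulVec (L.mulVec w + μ - μ) / 2)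
      = c0 * (GG w * (C + (v ᵥ* L) ⬝ᵥ w + w ⬝ᵥ (L * N * L).mulVec w / 2)) := by
    intro w
    have hw : L.mulVec w + μ - μ = L.mulVec w := add_sub_cancel_right _ _
    unfold gaussianPdf
    rw [hw, hquad w, exp_GG w, Matrix.dotProduct_mulVec v, hLML N w]
    ring
  rw [integral_congr_ae (Filter.Eventually.of_forall point)]
  rw [MeasureTheory.integral_const_mul, std_lemma]
  have htrace : (L * N * L).trace = (N * Sg).trace := by
    rw [Matrix.trace_mul_cycle, hLL, Matrix.trace_mul_comm]
  rw [htrace]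
  have hconst : |L.det| * c0 * Real.sqrt (2 * Real.pi) ^ n = 1 := by
    rw [hc0, Fintype.card_fin, Real.sqrt_mul (by positivity) Sg.det, ← hdetL2,
      Real.sqrt_mul_self_eq_abs, sqrt_two_pi_pow]
    have h1 : (0:ℝ) < Real.sqrt (2 * Real.pi) ^ n := by
      apply pow_pos
      apply Real.sqrt_pos.mpr
      positivity
    field_simp
  calc |L.det| * (c0 * (Real.sqrt (2 * Real.pi) ^ n * (C + (N * Sg).trace / 2)))
      = (|L.det| * c0 * Real.sqrt (2 * Real.pi) ^ n) * (C + (N * Sg).trace / 2) := by ring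
    _ = C + (N * Sg).trace / 2 := by rw [hconst, one_mul]

lemma quad_shift {n : ℕ} (A : Matrix (Fin n) (Fin n) ℝ) (a w : Fin n → ℝ) :
    (a + w) ⬝ᵥ A.mulVec (a + w) =
      a ⬝ᵥ A.mulVec a + (a ᵥ* A + A.mulVec a) ⬝ᵥ w + w ⬝ᵥ A.mulVec w := by
  rw [Matrix.mulVec_add, dotProduct_add, add_dotProduct, add_dotProduct,
    add_dotProduct, Matrix.dotProduct_mulVec a A w,
    dotProduct_comm w (A.mulVec a)]
  ring

lemma decomp {n : ℕ} (S R : Matrix (Fin n) (Fin n) ℝ) (y μ z : Fin n → ℝ) :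
    nll S z + nll R (y - z) =
      (nll S μ + nll R (y - μ)) +
        ((1/2 : ℝ) • (μ ᵥ* S⁻¹ + S⁻¹.mulVec μ - ((y - μ) ᵥ* R⁻¹ + R⁻¹.mulVec (y - μ)))) ⬝ᵥ (z - μ) +
        (z - μ) ⬝ᵥ (S⁻¹ + R⁻¹).mulVec (z - μ) / 2 := by
  have hz : z = μ + (z - μ) := by abel
  have hyz : y - z = (y - μ) + (-(z - μ)) := by abel
  calc nll S z + nll R (y - z)
      = nll S (μ + (z - μ)) + nll R ((y - μ) + (-(z - μ))) := by rw [← hz, ← hyz]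
    _ = _ := by
      unfold nll
      rw [quad_shift S⁻¹ μ (z - μ), quad_shift R⁻¹ (y - μ) (-(z - μ))]
      simp only [smul_dotProduct, smul_eq_mul, sub_dotProduct,
        add_dotProduct, neg_dotProduct, dotProduct_neg,
        Matrix.mulVec_neg, neg_neg, Matrix.add_mulVec, dotProduct_add]
      ring


/-- The E function: the expectation of the joint negative log-likelihood
`ℓ_{S(θ)}(z) + ℓ_{R(θ)}(y − z)` under the conditional Gaussian law of `z | y`
at parameters `θ₀` (mean `ẑ(θ₀) = (S₀⁻¹ + R₀⁻¹)⁻¹ R₀⁻¹ y`, covariance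
`(S₀⁻¹ + R₀⁻¹)⁻¹`) equals the trace term plus `ℓ_{S}(ẑ) + ℓ_{R}(y − ẑ)`. -/
theorem E_function_formula {n : ℕ}
    (S R S₀ R₀ : Matrix (Fin n) (Fin n) ℝ)
    (hS : S.PosDef) (hR : R.PosDef) (hS₀ : S₀.PosDef) (hR₀ : R₀.PosDef)
    (y : Fin n → ℝ) :
    ∫ z : Fin n → ℝ,
        gaussianPdf ((S₀⁻¹ + R₀⁻¹)⁻¹.mulVec (R₀⁻¹.mulVec y)) (S₀⁻¹ + R₀⁻¹)⁻¹ z *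
          (nll S z + nll R (y - z)) =
      (1 / 2) * ((S⁻¹ + R⁻¹) * (S₀⁻¹ + R₀⁻¹)⁻¹).trace +
        nll S ((S₀⁻¹ + R₀⁻¹)⁻¹.mulVec (R₀⁻¹.mulVec y)) +
        nll R (y - (S₀⁻¹ + R₀⁻¹)⁻¹.mulVec (R₀⁻¹.mulVec y)) := by
  have hSg : ((S₀⁻¹ + R₀⁻¹)⁻¹ : Matrix (Fin n) (Fin n) ℝ).PosDef := (hS₀.inv.add hR₀.inv).inv
  set μ : Fin n → ℝ := (S₀⁻¹ + R₀⁻¹)⁻¹.mulVec (R₀⁻¹.mulVec y) with hμ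
  have hpt : ∀ z : Fin n → ℝ,
      gaussianPdf μ (S₀⁻¹ + R₀⁻¹)⁻¹ z * (nll S z + nll R (y - z)) =
      gaussianPdf μ (S₀⁻¹ + R₀⁻¹)⁻¹ z * ((nll S μ + nll R (y - μ)) +
        ((1/2 : ℝ) • (μ ᵥ* S⁻¹ + S⁻¹.mulVec μ -
          ((y - μ) ᵥ* R⁻¹ + R⁻¹.mulVec (y - μ)))) ⬝ᵥ (z - μ) +
        (z - μ) ⬝ᵥ (S⁻¹ + R⁻¹).mulVec (z - μ) / 2) := fun z => by rw [decomp S R y μ z]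
  rw [integral_congr_ae (Filter.Eventually.of_forall hpt)]
  rw [master μ _ hSg _ _ _]
  ring
end
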